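/- Let A, T > 0, let m ≥ 0, and let μ be a Borel measure on ℝ such that μ([t − A, t)) ≤ m for every t ∈ [0,T]. Let h: [0,A] → [0,∞) be measurable and square-integrable. Then ∫₀^T ( ∫_{[t−A,t)} h(t − u) dμ(u) )² dt ≤ m · μ([−A, T]) · ∫₀^A h(s)² ds. -/

import Mathlib

open MeasureTheory
open scoped ENNReal

/-- Cauchy–Schwarz for lower Lebesgue integrals. -/
lemma stmt7_cs_aux {α : Type*} [MeasurableSpace α] (ν : Measure α) (f : α → ℝ≥0∞)
    (hf : AEMeasurable f ν) :
    (∫⁻ x, f x ∂ν) ^ 2 ≤ ν Set.univ * ∫⁻ x, f x ^ 2 ∂ν := by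
  have hpq : Real.HolderConjugate 2 2 := Real.HolderConjugate.two_two
  have H := ENNReal.lintegral_mul_le_Lp_mul_Lq ν hpq hf (aemeasurable_const (b := (1:ℝ≥0∞)))
  simp only [mul_one, Pi.mul_apply, Pi.one_apply, ENNReal.one_rpow, lintegral_one] at H
  have H2 := pow_le_pow_left₀ zero_le H 2
  calc (∫⁻ x, f x ∂ν) ^ 2
      ≤ ((∫⁻ x, f x ^ (2:ℝ) ∂ν) ^ (1/(2:ℝ)) * (ν Set.univ) ^ (1/(2:ℝ))) ^ 2 := H2
    _ = (∫⁻ x, f x ^ (2:ℝ) ∂ν) * ν Set.univ := by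
        rw [mul_pow, ← ENNReal.rpow_natCast (_ ^ (1/(2:ℝ))) 2,
          ← ENNReal.rpow_natCast (_ ^ (1/(2:ℝ))) 2, ← ENNReal.rpow_mul, ← ENNReal.rpow_mul]
        norm_num
    _ = ν Set.univ * ∫⁻ x, f x ^ 2 ∂ν := by
        rw [mul_comm]; congr 1; refine lintegral_congr fun x => ?_
        rw [← ENNReal.rpow_natCast (f x) 2]; norm_num

/-- Translation invariance of the Lebesgue integral over a translated interval. -/
lemma stmt7_shift_aux (g : ℝ → ℝ≥0∞) (hg : Measurable g) (u a b : ℝ) :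
    ∫⁻ t in Set.Ioc (u + a) (u + b), g (t - u) = ∫⁻ s in Set.Ioc a b, g s := by
  conv_lhs => rw [← map_add_right_eq_self volume u]
  rw [Measure.restrict_map (measurable_add_const u) measurableSet_Ioc,
    lintegral_map (f := fun t => g (t - u)) (by fun_prop) (measurable_add_const u)]
  simp [Set.preimage_add_const_Ioc]

/-- The window bound implies finiteness of `μ` on `[-A, T)`. -/
lemma stmt7_fin_aux (A T m : ℝ) (hA : 0 < A) (hT : 0 < T)
    (μ : Measure ℝ)
    (hμ : ∀ t ∈ Set.Icc (0:ℝ) T, μ (Set.Ico (t - A) t) ≤ ENNReal.ofReal m) :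
    μ (Set.Ico (-A) T) < ∞ := by
  have key : ∀ n : ℕ, μ (Set.Ico (-A) (min (n * A) T)) ≤ (n + 1) * ENNReal.ofReal m := by
    intro n
    induction n with
    | zero =>
      simp only [Nat.cast_zero, zero_mul, min_eq_left hT.le]
      calc μ (Set.Ico (-A) 0) = μ (Set.Ico (0 - A) 0) := by rw [zero_sub]
        _ ≤ ENNReal.ofReal m := hμ 0 ⟨le_refl 0, hT.le⟩
        _ ≤ (0 + 1) * ENNReal.ofReal m := by simp
    | succ n ih =>
      set c : ℝ := min ((n + 1 : ℕ) * A) T with hc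
      have hc0 : 0 ≤ c := le_min (by positivity) hT.le
      have hcT : c ≤ T := min_le_right _ _
      have hsub : Set.Ico (-A) c ⊆ Set.Ico (-A) (min (n * A) T) ∪ Set.Ico (c - A) c := by
        intro u ⟨hu1, hu2⟩
        by_cases hu : u < min (n * A) T
        · exact Or.inl ⟨hu1, hu⟩
        · push_neg at hu
          refine Or.inr ⟨?_, hu2⟩
          refine le_trans ?_ hu
          refine le_min ?_ (by linarith [min_le_right ((n + 1 : ℕ) * A) T])
          have : c ≤ (n + 1 : ℕ) * A := min_le_left _ _
          push_cast at this ⊢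
          linarith
      calc μ (Set.Ico (-A) c)
          ≤ μ (Set.Ico (-A) (min (n * A) T)) + μ (Set.Ico (c - A) c) :=
            (measure_mono hsub).trans (measure_union_le _ _)
        _ ≤ (n + 1) * ENNReal.ofReal m + ENNReal.ofReal m :=
            add_le_add ih (hμ c ⟨hc0, hcT⟩)
        _ = ((n : ℝ≥0∞) + 1 + 1) * ENNReal.ofReal m := by ring
        _ = ((n + 1 : ℕ) + 1) * ENNReal.ofReal m := by push_cast; ring
  obtain ⟨n, hn⟩ : ∃ n : ℕ, T ≤ n * A := ⟨⌈T / A⌉₊, by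
    rw [← div_le_iff₀ hA]; exact Nat.le_ceil _⟩
  have := key n
  rw [min_eq_right hn] at this
  exact this.trans_lt (by finiteness)

/-- Pathwise variance bound for sliding-window integrals: if the
measure `μ` gives mass at most `m` to every window `[t−A, t)` with `t ∈ [0,T]`,
and `h ≥ 0` is measurable and square-integrable on `[0,A]`, then
`∫₀^T (∫_{[t−A,t)} h(t−u) dμ(u))² dt ≤ m·μ([−A,T])·∫₀^A h²`. -/
theorem stmt7 (A T m : ℝ) (hA : 0 < A) (hT : 0 < T) (hm : 0 ≤ m)
    (μ : Measure ℝ)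
    (hμ : ∀ t ∈ Set.Icc (0:ℝ) T, μ (Set.Ico (t - A) t) ≤ ENNReal.ofReal m)
    (h : ℝ → ℝ) (hmeas : Measurable h) (hnonneg : ∀ x, 0 ≤ h x)
    (hL2 : ∫⁻ s in Set.Icc (0:ℝ) A, ENNReal.ofReal (h s ^ 2) < ∞) :
    ∫⁻ t in Set.Icc (0:ℝ) T,
        (∫⁻ u in Set.Ico (t - A) t, ENNReal.ofReal (h (t - u)) ∂μ) ^ 2
      ≤ ENNReal.ofReal m * μ (Set.Icc (-A) T)
          * ∫⁻ s in Set.Icc (0:ℝ) A, ENNReal.ofReal (h s ^ 2) := by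
  set S : Set ℝ := Set.Ico (-A) T with hS
  set ν : Measure ℝ := μ.restrict S with hν
  haveI hνfin : IsFiniteMeasure ν := by
    constructor
    rw [hν, Measure.restrict_apply_univ]
    exact stmt7_fin_aux A T m hA hT μ hμ
  -- windows are inside S
  have hwin : ∀ t ∈ Set.Icc (0:ℝ) T, Set.Ico (t - A) t ⊆ S := by
    intro t ht u hu
    exact ⟨by linarith [ht.1, hu.1], lt_of_lt_of_le hu.2 ht.2⟩
  have hrestr : ∀ t ∈ Set.Icc (0:ℝ) T, ∀ g : ℝ → ℝ≥0∞,
      ∫⁻ u in Set.Ico (t - A) t, g u ∂μ = ∫⁻ u in Set.Ico (t - A) t, g u ∂ν := by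
    intro t ht g
    rw [hν, Measure.restrict_restrict measurableSet_Ico, Set.inter_eq_left.2 (hwin t ht)]
  -- pointwise Cauchy–Schwarz bound
  have hpt : ∀ t ∈ Set.Icc (0:ℝ) T,
      (∫⁻ u in Set.Ico (t - A) t, ENNReal.ofReal (h (t - u)) ∂μ) ^ 2
        ≤ ENNReal.ofReal m *
            ∫⁻ u in Set.Ico (t - A) t, ENNReal.ofReal (h (t - u) ^ 2) ∂ν := by
    intro t ht
    rw [hrestr t ht]
    refine (stmt7_cs_aux (ν.restrict (Set.Ico (t - A) t))
      (fun u => ENNReal.ofReal (h (t - u))) (by fun_prop)).trans ?_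
    rw [Measure.restrict_apply_univ]
    refine mul_le_mul' ?_ (le_of_eq (lintegral_congr fun u => ?_))
    · calc ν (Set.Ico (t - A) t) = μ (Set.Ico (t - A) t ∩ S) :=
            Measure.restrict_apply measurableSet_Ico
        _ ≤ μ (Set.Ico (t - A) t) := measure_mono Set.inter_subset_left
        _ ≤ ENNReal.ofReal m := hμ t ht
    · rw [← ENNReal.ofReal_pow (hnonneg _)]
  -- the kernel as an indicator function, jointly measurable
  let f : ℝ → ℝ → ℝ≥0∞ := fun t u =>
    Set.indicator (Set.Ioc u (u + A)) (fun t => ENNReal.ofReal (h (t - u) ^ 2)) t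
  have hfm : AEMeasurable (Function.uncurry f)
      ((volume.restrict (Set.Icc (0:ℝ) T)).prod ν) := by
    apply Measurable.aemeasurable
    have hset : Function.uncurry f = Set.indicator
        ({p : ℝ × ℝ | p.2 < p.1} ∩ {p : ℝ × ℝ | p.1 ≤ p.2 + A})
        (fun p => ENNReal.ofReal (h (p.1 - p.2) ^ 2)) := by
      ext p
      simp [f, Function.uncurry, Set.indicator_apply, Set.mem_Ioc, and_comm]
    rw [hset]
    exact Measurable.indicator (by fun_prop)
      ((measurableSet_lt measurable_snd measurable_fst).inter
        (measurableSet_le measurable_fst (measurable_snd.add_const A)))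
  -- rewrite the inner integral using the indicator kernel
  have step1 : ∀ t : ℝ,
      ∫⁻ u in Set.Ico (t - A) t, ENNReal.ofReal (h (t - u) ^ 2) ∂ν = ∫⁻ u, f t u ∂ν := by
    intro t
    rw [← lintegral_indicator measurableSet_Ico]
    refine lintegral_congr fun u => ?_
    simp only [f, Set.indicator_apply, Set.mem_Ico, Set.mem_Ioc]
    refine if_congr ⟨fun ⟨a, b⟩ => ⟨b, by linarith⟩, fun ⟨a, b⟩ => ⟨by linarith, a⟩⟩ rfl rfl
  -- Tonelli and the translation bound
  have key : ∫⁻ t in Set.Icc (0:ℝ) T,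
        ∫⁻ u in Set.Ico (t - A) t, ENNReal.ofReal (h (t - u) ^ 2) ∂ν
      ≤ μ (Set.Icc (-A) T) * ∫⁻ s in Set.Icc (0:ℝ) A, ENNReal.ofReal (h s ^ 2) := by
    calc ∫⁻ t in Set.Icc (0:ℝ) T,
          ∫⁻ u in Set.Ico (t - A) t, ENNReal.ofReal (h (t - u) ^ 2) ∂ν
        = ∫⁻ t in Set.Icc (0:ℝ) T, ∫⁻ u, f t u ∂ν := lintegral_congr fun t => step1 t
      _ = ∫⁻ u, (∫⁻ t in Set.Icc (0:ℝ) T, f t u) ∂ν := lintegral_lintegral_swap hfm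
      _ ≤ ∫⁻ _, (∫⁻ s in Set.Icc (0:ℝ) A, ENNReal.ofReal (h s ^ 2)) ∂ν := by
          refine lintegral_mono (μ := ν) fun u => ?_
          calc ∫⁻ t in Set.Icc (0:ℝ) T, f t u
              ≤ ∫⁻ t, f t u := setLIntegral_le_lintegral _ _
            _ = ∫⁻ t in Set.Ioc u (u + A), ENNReal.ofReal (h (t - u) ^ 2) :=
                lintegral_indicator measurableSet_Ioc _
            _ = ∫⁻ s in Set.Ioc (0:ℝ) A, ENNReal.ofReal (h s ^ 2) := by
                have := stmt7_shift_aux (fun s => ENNReal.ofReal (h s ^ 2)) (by fun_prop) u 0 A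
                simpa using this
            _ ≤ ∫⁻ s in Set.Icc (0:ℝ) A, ENNReal.ofReal (h s ^ 2) :=
                lintegral_mono_set Set.Ioc_subset_Icc_self
      _ = (∫⁻ s in Set.Icc (0:ℝ) A, ENNReal.ofReal (h s ^ 2)) * ν Set.univ :=
          lintegral_const _
      _ ≤ (∫⁻ s in Set.Icc (0:ℝ) A, ENNReal.ofReal (h s ^ 2)) * μ (Set.Icc (-A) T) := by
          refine mul_le_mul_right ?_ _
          rw [hν, Measure.restrict_apply_univ]
          exact measure_mono fun x hx => ⟨hx.1, hx.2.le⟩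
      _ = μ (Set.Icc (-A) T) * ∫⁻ s in Set.Icc (0:ℝ) A, ENNReal.ofReal (h s ^ 2) :=
          mul_comm _ _
  calc ∫⁻ t in Set.Icc (0:ℝ) T,
        (∫⁻ u in Set.Ico (t - A) t, ENNReal.ofReal (h (t - u)) ∂μ) ^ 2
      ≤ ∫⁻ t in Set.Icc (0:ℝ) T, ENNReal.ofReal m *
          ∫⁻ u in Set.Ico (t - A) t, ENNReal.ofReal (h (t - u) ^ 2) ∂ν :=
        lintegral_mono_ae ((ae_restrict_iff' measurableSet_Icc).2 (ae_of_all _ hpt))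
    _ = ENNReal.ofReal m * ∫⁻ t in Set.Icc (0:ℝ) T,
          ∫⁻ u in Set.Ico (t - A) t, ENNReal.ofReal (h (t - u) ^ 2) ∂ν :=
        lintegral_const_mul' _ _ ENNReal.ofReal_ne_top
    _ ≤ ENNReal.ofReal m *
          (μ (Set.Icc (-A) T) * ∫⁻ s in Set.Icc (0:ℝ) A, ENNReal.ofReal (h s ^ 2)) :=
        mul_le_mul_right key _
    _ = ENNReal.ofReal m * μ (Set.Icc (-A) T)
          * ∫⁻ s in Set.Icc (0:ℝ) A, ENNReal.ofReal (h s ^ 2) := by ring
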